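/- Let F : ℝ^d → ℝ be (m,b)-dissipative (⟨w, ∇F(w)⟩ ≥ m‖w‖² - b) and C², and let β > 0. Define the Langevin generator ℒg = Δg - β⟨∇F, ∇g⟩ and the Lyapunov function V(w) = exp(mβ‖w‖²/4). Then for all w ∈ ℝ^d, ℒV(w) ≤ ((mβ(d + bβ))/2 - (mβ)²‖w‖²/4)·V(w). -/

import Mathlib

open Real

section Aux

variable {d : ℕ}

local notation "E" => EuclideanSpace ℝ (Fin d)

lemma hasFDerivAt_Vc (c : ℝ) (w : E) :
    HasFDerivAt (fun v : E => Real.exp (c * ‖v‖ ^ 2))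
      ((Real.exp (c * ‖w‖ ^ 2) * (2 * c)) • innerSL ℝ w) w := by
  have h1 : HasFDerivAt (fun v : E => ‖v‖ ^ 2) (2 • innerSL ℝ w) w := by
    simpa using (hasFDerivAt_id w).norm_sq
  have h2 : HasFDerivAt (fun v : E => c * ‖v‖ ^ 2) (c • 2 • innerSL ℝ w) w :=
    h1.const_smul c
  have h3 := (Real.hasDerivAt_exp (c * ‖w‖ ^ 2)).comp_hasFDerivAt w h2
  refine h3.congr_fderiv ?_
  ext v
  simp [smul_smul]
  ring

lemma gradient_Vc (c : ℝ) (w : E) :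
    gradient (fun v : E => Real.exp (c * ‖v‖ ^ 2)) w
      = (Real.exp (c * ‖w‖ ^ 2) * (2 * c)) • w := by
  have h : HasGradientAt (fun v : E => Real.exp (c * ‖v‖ ^ 2))
      ((Real.exp (c * ‖w‖ ^ 2) * (2 * c)) • w) w := by
    rw [hasGradientAt_iff_hasFDerivAt]
    refine (hasFDerivAt_Vc c w).congr_fderiv ?_
    ext v
    simp [InnerProductSpace.toDual_apply_apply, real_inner_smul_left]
  exact h.gradient

lemma fderiv_Vc_apply (c : ℝ) (w : E) (u : E) :
    fderiv ℝ (fun v : E => Real.exp (c * ‖v‖ ^ 2)) w u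
      = Real.exp (c * ‖w‖ ^ 2) * (2 * c) * (inner ℝ w u : ℝ) := by
  rw [(hasFDerivAt_Vc c w).fderiv]
  simp

lemma second_deriv_Vc (c : ℝ) (w : E) (i : Fin d) :
    fderiv ℝ (fun v : E => fderiv ℝ (fun v : E => Real.exp (c * ‖v‖ ^ 2)) v
        (EuclideanSpace.single i 1)) w (EuclideanSpace.single i 1)
      = Real.exp (c * ‖w‖ ^ 2) * (2 * c)
        + Real.exp (c * ‖w‖ ^ 2) * (2 * c) ^ 2 * (w i) ^ 2 := by
  have hfun : (fun v : E => fderiv ℝ (fun v : E => Real.exp (c * ‖v‖ ^ 2)) v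
      (EuclideanSpace.single i 1))
      = fun v : E => Real.exp (c * ‖v‖ ^ 2) * (2 * c) * v i := by
    funext v
    rw [fderiv_Vc_apply]
    rw [EuclideanSpace.inner_single_right]
    simp
  rw [hfun]
  have h1 : HasFDerivAt (fun v : E => Real.exp (c * ‖v‖ ^ 2) * (2 * c))
      ((2 * c) • ((Real.exp (c * ‖w‖ ^ 2) * (2 * c)) • innerSL ℝ w)) w := by
    simpa [smul_smul, mul_comm] using (hasFDerivAt_Vc c w).mul_const (2 * c)
  have h2 : HasFDerivAt (fun v : E => v i) (EuclideanSpace.proj (𝕜 := ℝ) i) w :=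
    (EuclideanSpace.proj (𝕜 := ℝ) i).hasFDerivAt
  have h3 : HasFDerivAt (fun v : E => Real.exp (c * ‖v‖ ^ 2) * (2 * c) * v i) _ w := h1.mul h2
  rw [h3.fderiv]
  have hin : (inner ℝ w (EuclideanSpace.single i (1:ℝ)) : ℝ) = w i := by
    rw [EuclideanSpace.inner_single_right]; simp
  simp [hin]
  ring

lemma sum_sq_eq (w : E) : ∑ i, (w i) ^ 2 = ‖w‖ ^ 2 := by
  rw [EuclideanSpace.norm_eq, Real.sq_sqrt (Finset.sum_nonneg fun i _ => by positivity)]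
  simp

end Aux

/-- The Laplacian of a function on Euclidean space, as the sum of second
partial derivatives along the coordinate directions. -/
noncomputable def laplacian {d : ℕ}
    (g : EuclideanSpace ℝ (Fin d) → ℝ) (w : EuclideanSpace ℝ (Fin d)) : ℝ :=
  ∑ i : Fin d,
    fderiv ℝ (fun v => fderiv ℝ g v (EuclideanSpace.single i 1)) w
      (EuclideanSpace.single i 1)

/-- The generator of the (time-rescaled) overdamped Langevin diffusion:
`ℒ g = Δ g - β ⟨∇F, ∇g⟩`. -/
noncomputable def langevinGenerator {d : ℕ} (β : ℝ)
    (F g : EuclideanSpace ℝ (Fin d) → ℝ) (w : EuclideanSpace ℝ (Fin d)) : ℝ :=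
  laplacian g w - β * (inner ℝ (gradient F w) (gradient g w) : ℝ)

theorem lyapunov_drift_condition
    {d : ℕ} (F : EuclideanSpace ℝ (Fin d) → ℝ) (m b β : ℝ)
    (hm : 0 < m) (hb : 0 ≤ b) (hβ : 0 < β)
    (hF : ContDiff ℝ 2 F)
    (hdissip : ∀ w : EuclideanSpace ℝ (Fin d),
      (inner ℝ w (gradient F w) : ℝ) ≥ m * ‖w‖ ^ 2 - b)
    (V : EuclideanSpace ℝ (Fin d) → ℝ)
    (hV : ∀ w, V w = Real.exp (m * β * ‖w‖ ^ 2 / 4)) :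
    ∀ w : EuclideanSpace ℝ (Fin d),
      langevinGenerator β F V w ≤
        (m * β * (d + b * β) / 2 - (m * β) ^ 2 * ‖w‖ ^ 2 / 4) * V w := by
  intro w
  obtain ⟨c, hc⟩ : ∃ c : ℝ, c = m * β / 4 := ⟨_, rfl⟩
  have hVf : V = fun v : EuclideanSpace ℝ (Fin d) => Real.exp (c * ‖v‖ ^ 2) := by
    funext v; rw [hV, hc]; ring_nf
  obtain ⟨A, hA⟩ : ∃ A : ℝ, A = Real.exp (c * ‖w‖ ^ 2) := ⟨_, rfl⟩
  have hApos : 0 < A := hA ▸ Real.exp_pos _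
  have hlap : laplacian V w = d * (A * (2 * c)) + A * (2 * c) ^ 2 * ‖w‖ ^ 2 := by
    rw [hVf]
    unfold laplacian
    rw [Finset.sum_congr rfl fun i _ => second_deriv_Vc c w i]
    rw [Finset.sum_add_distrib, Finset.sum_const, ← Finset.mul_sum, sum_sq_eq, ← hA,
      Finset.card_univ, Fintype.card_fin, nsmul_eq_mul]
  have hgrad : (inner ℝ (gradient F w) (gradient V w) : ℝ)
      = (A * (2 * c)) * (inner ℝ w (gradient F w) : ℝ) := by
    rw [hVf, gradient_Vc, real_inner_smul_right, ← hA, real_inner_comm]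
  have hVw : V w = A := by rw [hVf, hA]
  rw [langevinGenerator, hlap, hgrad, hVw]
  have key := hdissip w
  have h1 : 0 ≤ A * ((inner ℝ w (gradient F w) : ℝ) - (m * ‖w‖ ^ 2 - b)) :=
    mul_nonneg hApos.le (by linarith)
  have h2 : 0 ≤ m * β ^ 2 / 2 * (A * ((inner ℝ w (gradient F w) : ℝ) - (m * ‖w‖ ^ 2 - b))) :=
    mul_nonneg (by positivity) h1
  simp only [hc]
  nlinarith [h2]
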